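/- Let E be a real Banach space, a < b real numbers and τ = b - a. If f : ℝ → E is three times continuously differentiable on [a,b], then (f(b) - f(a))/τ - (1/2)(f'(b) + f'(a)) = (1/(2τ)) ∫_a^b (b - s)(a - s) f'''(s) ds. -/

import Mathlib

open Set intervalIntegral

/-- Crank–Nicolson consistency identity:
`(f(b) - f(a))/τ - (1/2)(f'(b) + f'(a)) = (1/(2τ)) ∫_a^b (b - s)(a - s) f'''(s) ds`. -/
theorem crank_nicolson_consistency_identity
    {E : Type*} [NormedAddCommGroup E] [NormedSpace ℝ E] [CompleteSpace E]
    (a b τ : ℝ) (hab : a < b) (hτ : τ = b - a)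
    (f f' f'' f''' : ℝ → E)
    (hf : ∀ t ∈ Icc a b, HasDerivWithinAt f (f' t) (Icc a b) t)
    (hf' : ∀ t ∈ Icc a b, HasDerivWithinAt f' (f'' t) (Icc a b) t)
    (hf'' : ∀ t ∈ Icc a b, HasDerivWithinAt f'' (f''' t) (Icc a b) t)
    (hf''' : ContinuousOn f''' (Icc a b)) :
    (1 / τ) • (f b - f a) - (1 / 2 : ℝ) • (f' b + f' a)
      = (1 / (2 * τ)) • ∫ s in a..b, ((b - s) * (a - s)) • f''' s := by
  subst hτ
  have hτ0 : b - a ≠ 0 := by linarith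
  set F : ℝ → E := fun s =>
    ((b - s) * (a - s)) • f'' s - (2 * s - (a + b)) • f' s + (2 : ℝ) • f s with hF
  have hcf : ContinuousOn f (Icc a b) := fun t ht => (hf t ht).continuousWithinAt
  have hcf' : ContinuousOn f' (Icc a b) := fun t ht => (hf' t ht).continuousWithinAt
  have hcf'' : ContinuousOn f'' (Icc a b) := fun t ht => (hf'' t ht).continuousWithinAt
  have hFc : ContinuousOn F (Icc a b) := by
    apply ContinuousOn.add
    · apply ContinuousOn.sub
      · exact (Continuous.continuousOn (by continuity)).smul hcf''
      · exact (Continuous.continuousOn (by continuity)).smul hcf'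
    · exact continuousOn_const.smul hcf
  have hFd : ∀ t ∈ Icc a b,
      HasDerivWithinAt F (((b - t) * (a - t)) • f''' t) (Icc a b) t := by
    intro t ht
    have hw : HasDerivWithinAt (fun s : ℝ => (b - s) * (a - s))
        ((-1) * (a - t) + (b - t) * (-1)) (Icc a b) t :=
      ((hasDerivWithinAt_id t _).const_sub b).mul ((hasDerivWithinAt_id t _).const_sub a)
    have hw' : HasDerivWithinAt (fun s : ℝ => 2 * s - (a + b)) 2 (Icc a b) t := by
      simpa using ((hasDerivWithinAt_id t (Icc a b)).const_mul 2).sub_const (a + b)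
    have h1 := hw.smul (hf'' t ht)
    have h2 := hw'.smul (hf' t ht)
    have h3 := (hf t ht).const_smul (2 : ℝ)
    have := (h1.sub h2).add h3
    convert this using 1
    · rfl
    · match_scalars <;> ring
  have hInt : IntervalIntegrable (fun s => ((b - s) * (a - s)) • f''' s) MeasureTheory.volume a b := by
    apply ContinuousOn.intervalIntegrable
    rw [uIcc_of_le hab.le]
    exact (Continuous.continuousOn (by continuity)).smul hf'''
  have key : (∫ s in a..b, ((b - s) * (a - s)) • f''' s) = F b - F a := by
    apply integral_eq_sub_of_hasDeriv_right_of_le hab.le hFc _ hInt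
    intro t ht
    exact (((hFd t (Ioo_subset_Icc_self ht)).hasDerivAt
      (Icc_mem_nhds ht.1 ht.2)).hasDerivWithinAt)
  rw [key, hF]
  simp only
  match_scalars <;> field_simp <;> ring
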